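/- Let (A, m) be a Noetherian local commutative ring and let f ∈ m be a nonzerodivisor of A. Let E1, E2, E3 be finite free A-modules and let d1 : E1 → E2 and d2 : E2 → E3 be A-linear maps with d2 ∘ d1 = 0. If the induced sequence E1/fE1 → E2/fE2 → E3/fE3 is exact at the middle term (that is, for every x ∈ E2 with d2 x ∈ f·E3 there exist y ∈ E1 and z ∈ E2 with x = d1 y + f·z), then the original sequence is exact at the middle term: ker d2 = range d1. -/

import Mathlib

/-- **Lemma 3.1 (Noetherian local case).**
Let `(A, m)` be a Noetherian local commutative ring and `f ∈ m` a nonzerodivisor.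
Given a three-term complex `E1 → E2 → E3` of finite free `A`-modules which becomes
exact at the middle term after reduction mod `f`, the original complex is exact at
the middle term. -/
theorem stmt0 (A : Type*) [CommRing A] [IsNoetherianRing A] [IsLocalRing A]
    (f : A) (hf_mem : f ∈ IsLocalRing.maximalIdeal A)
    (hf_nzd : ∀ a : A, f * a = 0 → a = 0)
    (E1 E2 E3 : Type*)
    [AddCommGroup E1] [Module A E1] [Module.Finite A E1] [Module.Free A E1]
    [AddCommGroup E2] [Module A E2] [Module.Finite A E2] [Module.Free A E2]
    [AddCommGroup E3] [Module A E3] [Module.Finite A E3] [Module.Free A E3]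
    (d1 : E1 →ₗ[A] E2) (d2 : E2 →ₗ[A] E3)
    (hcomplex : ∀ x : E1, d2 (d1 x) = 0)
    (hmodf : ∀ x : E2, (∃ z3 : E3, d2 x = f • z3) →
      ∃ (y : E1) (z : E2), x = d1 y + f • z) :
    LinearMap.ker d2 = LinearMap.range d1 := by
  -- f is a nonzerodivisor on E3 since E3 is free
  have hf3 : ∀ z3 : E3, f • z3 = 0 → z3 = 0 := by
    intro z3 hz
    obtain ⟨I, b⟩ := Module.Free.exists_basis (R := A) (M := E3)
    apply b.repr.injective
    ext i
    have : b.repr (f • z3) i = 0 := by rw [hz]; simp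
    rw [map_smul] at this
    simpa using hf_nzd _ this
  have hRK : LinearMap.range d1 ≤ LinearMap.ker d2 := by
    rintro _ ⟨y, rfl⟩
    exact hcomplex y
  set R := LinearMap.range d1
  set K := LinearMap.ker d2
  set N := K.map R.mkQ with hN
  have hle : N ≤ (Ideal.span {f}) • N := by
    rintro _ ⟨x, hx, rfl⟩
    obtain ⟨y, z, hxz⟩ := hmodf x ⟨0, by simpa using (show d2 x = 0 from hx)⟩
    have hzK : z ∈ K := by
      have : f • d2 z = 0 := by
        have : d2 x = 0 := hx
        rw [hxz] at this
        simpa [hcomplex y] using this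
      exact hf3 _ this
    have : R.mkQ x = f • R.mkQ z := by
      rw [hxz]
      simp [Submodule.Quotient.mk_eq_zero, R]
    rw [this]
    exact Submodule.smul_mem_smul (Ideal.mem_span_singleton_self f)
      (Submodule.mem_map_of_mem hzK)
  have hNfg : N.FG := (isNoetherian_def.mp inferInstance) N
  have hNbot : N = ⊥ := by
    refine Submodule.eq_bot_of_le_smul_of_le_jacobson_bot (Ideal.span {f}) N hNfg hle ?_
    rw [IsLocalRing.jacobson_eq_maximalIdeal ⊥ bot_ne_top]
    exact (Ideal.span_singleton_le_iff_mem _).2 hf_mem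
  have hKR : K ≤ R := by
    intro x hx
    have : R.mkQ x ∈ N := Submodule.mem_map_of_mem hx
    rw [hNbot] at this
    simpa [Submodule.Quotient.mk_eq_zero] using this
  exact le_antisymm hKR hRK
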